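/- Let 𝒳 ⊆ ℝ^p be nonempty compact, f : ℝ^p → ℝ^n continuous, and 𝒴 = f(𝒳). Let (x_i)_{i≥1} be i.i.d. random variables with common law P_𝒳 satisfying P_𝒳(𝒳) = 1 and the boundary-positivity condition: for every y ∈ ∂𝒴 and every r > 0, P_𝒳({x ∈ 𝒳 : f(x) lies in the open ball of center y and radius r}) > 0. Let ε̄ ≥ 0 and (ε_M)_{M≥1} with ε_M ≥ 0 and ε_M → ε̄, and define Ŷ^M = convexHull({f(x_1), …, f(x_M)}) ⊕ closedBall(0, ε_M). Then for every open set G ⊆ ℝ^n with G ∩ (convexHull(𝒴) ⊕ closedBall(0, ε̄)) ≠ ∅, the probability that Ŷ^M ∩ G = ∅ for infinitely many M is zero. -/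

import Mathlib

open MeasureTheory ProbabilityTheory Metric Filter Pointwise

/-- From any point of a compact set, moving along a nonzero direction we hit the frontier. -/
lemma aux_frontier_ray {E : Type*} [NormedAddCommGroup E] [NormedSpace ℝ E] {s : Set E}
    (hs : IsCompact s) {y : E} (hy : y ∈ s) {v : E} (hv : v ≠ 0) :
    ∃ t : ℝ, 0 ≤ t ∧ y + t • v ∈ frontier s := by
  set T : Set ℝ := Set.Ici 0 ∩ (fun t : ℝ => y + t • v) ⁻¹' s with hT
  have hT0 : (0:ℝ) ∈ T := ⟨Set.mem_Ici.2 le_rfl, by simpa using hy⟩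
  have hTclosed : IsClosed T :=
    isClosed_Ici.inter (hs.isClosed.preimage (by continuity))
  obtain ⟨R, hR⟩ := hs.isBounded.subset_closedBall 0
  have hTbdd : Bornology.IsBounded T := by
    apply (Metric.isBounded_Icc (0:ℝ) ((R + ‖y‖)/‖v‖)).subset
    rintro t ⟨ht0, hts⟩
    refine ⟨ht0, ?_⟩
    have h1 : ‖y + t • v‖ ≤ R := by simpa using hR hts
    have h2 : t * ‖v‖ ≤ R + ‖y‖ := by
      have := norm_le_norm_add_norm_sub' (y + t • v) y
      have h3 : ‖t • v‖ = t * ‖v‖ := by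
        rw [norm_smul, Real.norm_eq_abs, abs_of_nonneg ht0]
      calc t * ‖v‖ = ‖(y + t•v) - y‖ := by rw [add_sub_cancel_left, h3]
        _ ≤ ‖y + t•v‖ + ‖y‖ := norm_sub_le _ _
        _ ≤ R + ‖y‖ := by linarith
    rw [le_div_iff₀ (norm_pos_iff.2 hv)]
    exact h2
  have hTcpt : IsCompact T := Metric.isCompact_of_isClosed_isBounded hTclosed hTbdd
  set t₀ := sSup T with ht₀
  have ht₀T : t₀ ∈ T := hTcpt.sSup_mem ⟨0, hT0⟩
  refine ⟨t₀, ht₀T.1, ?_⟩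
  rw [frontier, Set.mem_diff]
  constructor
  · exact subset_closure ht₀T.2
  · intro hint
    obtain ⟨r, hr, hball⟩ := Metric.isOpen_iff.1 isOpen_interior _ hint
    set t₁ := t₀ + (r/2) / ‖v‖ with ht₁
    have hvpos : 0 < ‖v‖ := norm_pos_iff.2 hv
    have ht₁gt : t₀ < t₁ := by
      have : 0 < (r/2)/‖v‖ := by positivity
      simp only [ht₁]; linarith
    have hmem : y + t₁ • v ∈ s := by
      have : y + t₁ • v ∈ ball (y + t₀ • v) r := by
        rw [mem_ball, dist_eq_norm]
        have : y + t₁ • v - (y + t₀ • v) = (t₁ - t₀) • v := by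
          rw [sub_smul]; abel
        rw [this, norm_smul, Real.norm_eq_abs, abs_of_nonneg (le_of_lt (by linarith))]
        rw [ht₁]
        have : (t₀ + r/2/‖v‖ - t₀) = r/2/‖v‖ := by ring
        rw [this, div_mul_cancel₀ _ (ne_of_gt hvpos)]
        linarith
      exact interior_subset (hball this)
    have : t₁ ∈ T := ⟨le_trans ht₀T.1 (le_of_lt ht₁gt), hmem⟩
    have : t₁ ≤ t₀ := le_csSup hTbdd.bddAbove this
    linarith

open MeasureTheory ProbabilityTheory

lemma aux_convexHull_frontier {E : Type*} [NormedAddCommGroup E] [NormedSpace ℝ E] [Nontrivial E]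
    {s : Set E} (hs : IsCompact s) : convexHull ℝ s ⊆ convexHull ℝ (frontier s) := by
  apply convexHull_min _ (convex_convexHull ℝ _)
  intro y hy
  obtain ⟨v, hv⟩ := exists_ne (0 : E)
  obtain ⟨t₁, ht₁0, ht₁⟩ := aux_frontier_ray hs hy hv
  obtain ⟨t₂, ht₂0, ht₂⟩ := aux_frontier_ray hs hy (neg_ne_zero.2 hv)
  have hseg : y ∈ segment ℝ (y + t₂ • (-v)) (y + t₁ • v) := by
    rcases eq_or_lt_of_le (by linarith : (0:ℝ) ≤ t₁ + t₂) with h0 | h0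
    · have e1 : t₁ = 0 := by linarith
      have e2 : t₂ = 0 := by linarith
      simp only [e1, e2, zero_smul, add_zero]
      exact left_mem_segment ℝ _ _
    · have hs0 : t₁ + t₂ ≠ 0 := ne_of_gt h0
      refine ⟨t₁ / (t₁ + t₂), t₂ / (t₁ + t₂), by positivity, by positivity, ?_, ?_⟩
      · field_simp
      · match_scalars <;> field_simp <;> ring
  exact (convex_convexHull ℝ _).segment_subset
    (subset_convexHull ℝ _ ht₂) (subset_convexHull ℝ _ ht₁) hseg

lemma aux_sum_smul_norm {E : Type*} [NormedAddCommGroup E] [NormedSpace ℝ E] {ι : Type*}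
    (t : Finset ι) (w : ι → ℝ) (z z' : ι → E) (hw : ∀ i ∈ t, 0 ≤ w i)
    (hw1 : ∑ i ∈ t, w i = 1) {r : ℝ} (hz : ∀ i ∈ t, ‖z i - z' i‖ ≤ r) :
    ‖∑ i ∈ t, w i • z i - ∑ i ∈ t, w i • z' i‖ ≤ r := by
  rw [← Finset.sum_sub_distrib]
  calc ‖∑ i ∈ t, (w i • z i - w i • z' i)‖ ≤ ∑ i ∈ t, ‖w i • z i - w i • z' i‖ :=
        norm_sum_le _ _
    _ ≤ ∑ i ∈ t, w i * r := by
        apply Finset.sum_le_sum; intro i hi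
        rw [← smul_sub, norm_smul, Real.norm_eq_abs, abs_of_nonneg (hw i hi)]
        exact mul_le_mul_of_nonneg_left (hz i hi) (hw i hi)
    _ = r := by rw [← Finset.sum_mul, hw1, one_mul]

lemma aux_exists_hit {Ω : Type*} [MeasureSpace Ω] [IsProbabilityMeasure (ℙ : Measure Ω)]
    {q : ℕ} (x : ℕ → Ω → EuclideanSpace ℝ (Fin q)) (hxmeas : ∀ i, Measurable (x i))
    (P𝒳 : Measure (EuclideanSpace ℝ (Fin q))) [IsProbabilityMeasure P𝒳]
    (hlaw : ∀ i, Measure.map (x i) ℙ = P𝒳)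
    (hindep : iIndepFun x ℙ)
    {B : Set (EuclideanSpace ℝ (Fin q))} (hB : MeasurableSet B) (hBpos : 0 < P𝒳 B) :
    ℙ {ω | ∀ i, x i ω ∉ B} = 0 := by
  have hsm : ∀ i, MeasurableSet ((x i) ⁻¹' B) := fun i => (hxmeas i) hB
  have hiset : iIndepSet (fun i => (x i) ⁻¹' B) ℙ :=
    (iIndepSet_iff_meas_biInter hsm).2 (fun S => hindep.meas_biInter (fun i _ => ⟨B, hB, rfl⟩))
  have hmeas_i : ∀ i, ℙ ((x i) ⁻¹' B) = P𝒳 B := fun i => by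
    rw [← hlaw i, Measure.map_apply (hxmeas i) hB]
  have hsum : (∑' i, ℙ ((x i) ⁻¹' B)) = ⊤ := by
    simp only [hmeas_i]
    exact ENNReal.tsum_const_eq_top_of_ne_zero hBpos.ne'
  have hls := ProbabilityTheory.measure_limsup_eq_one hsm hiset hsum
  have hsub : {ω | ∀ i, x i ω ∉ B} ⊆ (limsup (fun i => (x i) ⁻¹' B) atTop)ᶜ := by
    intro ω hω hmem
    obtain ⟨i, hi⟩ := (mem_limsup_iff_frequently_mem.1 hmem).exists
    exact hω i hi
  apply measure_mono_null hsub
  have hmls : MeasurableSet (limsup (fun i => (x i) ⁻¹' B) atTop) :=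
    MeasurableSet.measurableSet_limsup (s := fun i => x i ⁻¹' B) (fun i => hsm i)
  rw [measure_compl hmls (measure_ne_top _ _), hls]
  simp

/-- **Condition (C2): the padded hull almost surely eventually meets every open set
intersecting the limit.** For every open `G` intersecting
`convexHull (f '' 𝒳) ⊕ closedBall 0 ε̄`, the probability that the padded convex hull of
the first `M` output samples misses `G` for infinitely many `M` is zero. -/
theorem padded_hull_meets_open_sets {p n : ℕ}
    (𝒳 : Set (EuclideanSpace ℝ (Fin p))) (h𝒳ne : 𝒳.Nonempty) (h𝒳c : IsCompact 𝒳)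
    (f : EuclideanSpace ℝ (Fin p) → EuclideanSpace ℝ (Fin n)) (hf : Continuous f)
    {Ω : Type*} [MeasureSpace Ω] [IsProbabilityMeasure (ℙ : Measure Ω)]
    (x : ℕ → Ω → EuclideanSpace ℝ (Fin p)) (hxmeas : ∀ i, Measurable (x i))
    (P𝒳 : Measure (EuclideanSpace ℝ (Fin p))) [IsProbabilityMeasure P𝒳]
    (hlaw : ∀ i, Measure.map (x i) ℙ = P𝒳)
    (hindep : iIndepFun x ℙ)
    (hsupp : P𝒳 𝒳 = 1)
    (hbd : ∀ y ∈ frontier (f '' 𝒳), ∀ r > 0,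
      0 < P𝒳 {x' ∈ 𝒳 | f x' ∈ Metric.ball y r})
    (εbar : ℝ) (hεbar : 0 ≤ εbar)
    (εs : ℕ → ℝ) (hεs : ∀ M, 0 ≤ εs M)
    (hεlim : Tendsto εs atTop (nhds εbar))
    (G : Set (EuclideanSpace ℝ (Fin n))) (hG : IsOpen G)
    (hGne : (G ∩ (convexHull ℝ (f '' 𝒳) +
      Metric.closedBall (0 : EuclideanSpace ℝ (Fin n)) εbar)).Nonempty) :
    ℙ {ω | ∀ M₀ : ℕ, ∃ M ≥ M₀,
        (convexHull ℝ ((fun i => f (x i ω)) '' Set.Iio M) +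
          Metric.closedBall (0 : EuclideanSpace ℝ (Fin n)) (εs M)) ∩ G = ∅} = 0 := by
  classical
  obtain ⟨g, hgG, hgsum⟩ := hGne
  obtain ⟨δ, hδ, hballG⟩ := Metric.isOpen_iff.1 hG g hgG
  obtain ⟨c, hc, e, he, hce⟩ := Set.mem_add.1 hgsum
  have hec : ‖e‖ ≤ εbar := mem_closedBall_zero_iff.1 he
  rcases subsingleton_or_nontrivial (EuclideanSpace ℝ (Fin n)) with hsub | hnt
  · -- trivial codomain: the event is empty
    have hempty : {ω : Ω | ∀ M₀ : ℕ, ∃ M ≥ M₀,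
        (convexHull ℝ ((fun i => f (x i ω)) '' Set.Iio M) +
          Metric.closedBall (0 : EuclideanSpace ℝ (Fin n)) (εs M)) ∩ G = ∅} = ∅ := by
      ext ω
      simp only [Set.mem_setOf_eq, Set.mem_empty_iff_false, iff_false, not_forall]
      push_neg
      refine ⟨1, fun M hM => ?_⟩
      have h1 : f (x 0 ω) ∈ convexHull ℝ ((fun i => f (x i ω)) '' Set.Iio M) :=
        subset_convexHull ℝ _ ⟨0, Set.mem_Iio.2 hM, rfl⟩
      have h2 : (0 : EuclideanSpace ℝ (Fin n)) ∈
          Metric.closedBall (0 : EuclideanSpace ℝ (Fin n)) (εs M) :=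
        mem_closedBall_self (hεs M)
      exact ⟨g, (Subsingleton.elim _ g) ▸ Set.add_mem_add h1 h2, hgG⟩
    rw [hempty]; exact measure_empty
  · set 𝒴 := f '' 𝒳 with h𝒴
    have h𝒴c : IsCompact 𝒴 := h𝒳c.image hf
    have hcf : c ∈ convexHull ℝ (frontier 𝒴) := aux_convexHull_frontier h𝒴c hc
    rw [convexHull_eq] at hcf
    obtain ⟨ι, t, w, z, hw0, hw1, hzfr, hcen⟩ := hcf
    set B : ι → Set (EuclideanSpace ℝ (Fin p)) :=
      fun j => 𝒳 ∩ f ⁻¹' (Metric.ball (z j) (δ/4)) with hBdef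
    have hBmeas : ∀ j, MeasurableSet (B j) := fun j =>
      (h𝒳c.isClosed.measurableSet).inter (isOpen_ball.measurableSet.preimage hf.measurable)
    have hBpos : ∀ j ∈ t, 0 < P𝒳 (B j) := by
      intro j hj
      have h := hbd (z j) (hzfr j hj) (δ/4) (by positivity)
      have hseteq : {x' ∈ 𝒳 | f x' ∈ Metric.ball (z j) (δ/4)} = B j := by
        ext x'; simp [hBdef]
      rwa [hseteq] at h
    have hnull : ℙ (⋃ j ∈ t, {ω | ∀ i, x i ω ∉ B j}) = 0 :=
      (measure_biUnion_null_iff t.countable_toSet).2 fun j hj =>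
        aux_exists_hit x hxmeas P𝒳 hlaw hindep (hBmeas j) (hBpos j hj)
    apply measure_mono_null _ hnull
    intro ω hω
    by_contra hnot
    have hhit : ∀ j ∈ t, ∃ i, x i ω ∈ B j := by
      intro j hj
      by_contra hcon
      push_neg at hcon
      exact hnot (Set.mem_biUnion hj (fun i => hcon i))
    set I : ι → ℕ := fun j => if h : ∃ i, x i ω ∈ B j then h.choose else 0 with hIdef
    have hIspec : ∀ j ∈ t, x (I j) ω ∈ B j := by
      intro j hj
      have h := hhit j hj
      simp only [hIdef, dif_pos h]
      exact h.choose_spec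
    obtain ⟨M₂, hM₂⟩ := Metric.tendsto_atTop.1 hεlim (δ/4) (by positivity)
    obtain ⟨M, hMge, hMempty⟩ := hω (max (t.sup I + 1) M₂)
    have hIM : ∀ j ∈ t, I j < M := fun j hj =>
      lt_of_lt_of_le (Nat.lt_succ_of_le (Finset.le_sup hj))
        (le_trans (le_max_left _ _) hMge)
    -- the shifted padding vector
    have heM : ∃ eM : EuclideanSpace ℝ (Fin n), ‖eM‖ ≤ εs M ∧
        ‖eM - e‖ ≤ εbar - min (εs M) εbar := by
      rcases eq_or_lt_of_le hεbar with h0 | h0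
      · have he0 : e = 0 := norm_le_zero_iff.1 (h0 ▸ hec)
        refine ⟨0, by simpa using hεs M, ?_⟩
        simp only [he0, sub_zero, norm_zero, sub_nonneg]
        exact min_le_right _ _
      · have hmin0 : (0:ℝ) ≤ min (εs M) εbar := le_min (hεs M) hεbar
        have hdiv0 : (0:ℝ) ≤ min (εs M) εbar / εbar := div_nonneg hmin0 h0.le
        refine ⟨(min (εs M) εbar / εbar) • e, ?_, ?_⟩
        · rw [norm_smul, Real.norm_eq_abs, abs_of_nonneg hdiv0]
          calc min (εs M) εbar / εbar * ‖e‖ ≤ min (εs M) εbar / εbar * εbar :=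
                mul_le_mul_of_nonneg_left hec hdiv0
            _ = min (εs M) εbar := div_mul_cancel₀ _ (ne_of_gt h0)
            _ ≤ εs M := min_le_left _ _
        · have hrw : (min (εs M) εbar / εbar) • e - e = (min (εs M) εbar / εbar - 1) • e := by
            rw [sub_smul, one_smul]
          have hle : min (εs M) εbar / εbar ≤ 1 := (div_le_one h0).2 (min_le_right _ _)
          rw [hrw, norm_smul, Real.norm_eq_abs, abs_of_nonpos (by linarith), neg_sub]
          calc (1 - min (εs M) εbar / εbar) * ‖e‖
              ≤ (1 - min (εs M) εbar / εbar) * εbar :=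
                mul_le_mul_of_nonneg_left hec (by linarith)
            _ = εbar - min (εs M) εbar := by field_simp
      
    obtain ⟨eM, heM1, heM2⟩ := heM
    have hdist : εbar - min (εs M) εbar < δ/4 := by
      have h := hM₂ M (le_trans (le_max_right _ _) hMge)
      rw [Real.dist_eq] at h
      have habs : εbar - min (εs M) εbar ≤ |εs M - εbar| := by
        rcases le_total (εs M) εbar with hc1 | hc1
        · rw [min_eq_left hc1, abs_of_nonpos (by linarith)]; linarith
        · rw [min_eq_right hc1, sub_self]; exact abs_nonneg _
      linarith
    have hsum_mem : (∑ j ∈ t, w j • f (x (I j) ω)) ∈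
        convexHull ℝ ((fun i => f (x i ω)) '' Set.Iio M) := by
      rw [← Finset.centerMass_eq_of_sum_1 _ _ hw1]
      exact Finset.centerMass_mem_convexHull t hw0 (by rw [hw1]; exact one_pos)
        (fun j hj => ⟨I j, hIM j hj, rfl⟩)
    have hq_mem : (∑ j ∈ t, w j • f (x (I j) ω)) + eM ∈
        (convexHull ℝ ((fun i => f (x i ω)) '' Set.Iio M) +
          Metric.closedBall (0 : EuclideanSpace ℝ (Fin n)) (εs M)) :=
      Set.add_mem_add hsum_mem (mem_closedBall_zero_iff.2 heM1)
    have hczsum : c = ∑ j ∈ t, w j • z j := by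
      rw [← hcen, Finset.centerMass_eq_of_sum_1 _ _ hw1]
    have hnear : ‖(∑ j ∈ t, w j • f (x (I j) ω)) - c‖ ≤ δ/4 := by
      rw [hczsum]
      apply aux_sum_smul_norm t w _ _ hw0 hw1
      intro j hj
      have hb := (hIspec j hj).2
      simp only [Set.mem_preimage, mem_ball, dist_eq_norm] at hb
      exact le_of_lt hb
    have hqG : (∑ j ∈ t, w j • f (x (I j) ω)) + eM ∈ G := by
      apply hballG
      rw [mem_ball, dist_eq_norm]
      have hre : (∑ j ∈ t, w j • f (x (I j) ω)) + eM - g =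
          ((∑ j ∈ t, w j • f (x (I j) ω)) - c) + (eM - e) := by
        rw [← hce]; abel
      rw [hre]
      calc ‖((∑ j ∈ t, w j • f (x (I j) ω)) - c) + (eM - e)‖
          ≤ ‖(∑ j ∈ t, w j • f (x (I j) ω)) - c‖ + ‖eM - e‖ := norm_add_le _ _
        _ < δ := by linarith
    exact Set.eq_empty_iff_forall_notMem.1 hMempty _ ⟨hq_mem, hqG⟩
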